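/- Let n be a natural number and let F be a multiset of rational numbers. Let E₀ be the multiset consisting of n copies of 0. Then the following are equivalent: (a) for every μ ∈ ℚ, card(F^{≤μ}) ≤ card(E₀^{≤μ}), and whenever card(F^{≤μ}) = card(E₀^{≤μ}) the multisets F^{≤μ} and E₀^{≤μ} are equal; (b) every element of F is nonnegative, card(F) ≤ n, and if card(F) = n then F = E₀. -/
import Mathlib


/-- with `E₀` the multiset of `n` copies of `0`, the quotient-bundle
conditions relative to `E₀` hold for `F` iff every element of `F` is nonnegative,
`card F ≤ n`, and `F = E₀` when `card F = n`. -/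
theorem globally_generated_classification
    (n : ℕ) (F : Multiset ℚ) (E₀ : Multiset ℚ) (hE₀ : E₀ = Multiset.replicate n 0) :
    ((∀ μ : ℚ, (F.filter fun t => t ≤ μ).card ≤ (E₀.filter fun t => t ≤ μ).card) ∧
      (∀ μ : ℚ, (F.filter fun t => t ≤ μ).card = (E₀.filter fun t => t ≤ μ).card →
        F.filter (fun t => t ≤ μ) = E₀.filter fun t => t ≤ μ))
    ↔
    ((∀ x ∈ F, (0 : ℚ) ≤ x) ∧ Multiset.card F ≤ n ∧
      (Multiset.card F = n → F = E₀)) := by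
  subst hE₀
  have hrep : ∀ μ : ℚ, (Multiset.replicate n (0:ℚ)).filter (fun t => t ≤ μ) =
      if (0:ℚ) ≤ μ then Multiset.replicate n 0 else 0 := by
    intro μ
    split_ifs with h
    · exact Multiset.filter_eq_self.2 (fun a ha => (Multiset.eq_of_mem_replicate ha) ▸ h)
    · exact Multiset.filter_eq_nil.2 (fun a ha => by
        rw [Multiset.eq_of_mem_replicate ha]; exact fun hc => h hc)
  constructor
  · rintro ⟨h1, h2⟩
    have hnonneg : ∀ x ∈ F, (0:ℚ) ≤ x := by
      intro x hx
      by_contra hneg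
      push_neg at hneg
      have hc0 := h1 x
      rw [hrep x, if_neg (not_le.2 hneg), Multiset.card_zero, Nat.le_zero,
        Multiset.card_eq_zero] at hc0
      have hm : x ∈ F.filter (fun t => t ≤ x) := Multiset.mem_filter.2 ⟨hx, le_refl x⟩
      rw [hc0] at hm
      simp at hm
    have hsum : ∀ x ∈ F, x ≤ F.sum := fun x hx =>
      Multiset.single_le_sum hnonneg x hx
    have hsumnn : (0:ℚ) ≤ F.sum := Multiset.sum_nonneg hnonneg
    have hfull : F.filter (fun t => t ≤ F.sum) = F :=
      Multiset.filter_eq_self.2 hsum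
    have hcard := h1 F.sum
    rw [hfull, hrep _, if_pos hsumnn, Multiset.card_replicate] at hcard
    refine ⟨hnonneg, hcard, fun hc => ?_⟩
    have := h2 F.sum (by rw [hfull, hrep _, if_pos hsumnn, Multiset.card_replicate, hc])
    rwa [hfull, hrep _, if_pos hsumnn] at this
  · rintro ⟨hnn, hcard, heq⟩
    have key : ∀ μ : ℚ, ¬ (0:ℚ) ≤ μ → F.filter (fun t => t ≤ μ) = 0 := by
      intro μ hμ
      exact Multiset.filter_eq_nil.2 (fun a ha hle => hμ (le_trans (hnn a ha) hle))
    constructor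
    · intro μ
      rw [hrep μ]
      split_ifs with h
      · rw [Multiset.card_replicate]
        exact le_trans (Multiset.card_le_card (Multiset.filter_le _ _)) hcard
      · rw [key μ h]
    · intro μ hμ
      rw [hrep μ] at hμ ⊢
      split_ifs at hμ ⊢ with h
      · rw [Multiset.card_replicate] at hμ
        have hle : F.filter (fun t => t ≤ μ) ≤ F := Multiset.filter_le _ _
        have hcf : Multiset.card F = n :=
          le_antisymm hcard (hμ ▸ Multiset.card_le_card hle)
        have : F.filter (fun t => t ≤ μ) = F :=
          Multiset.eq_of_le_of_card_le hle (by rw [hμ, hcf])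
        rw [this, heq hcf]
      · exact key μ h
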